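/- Let p ∈ (0,1) and let K be a p-core CRG. If p ≤ 1/2, then K has no black edges and every white edge of K has both endpoints black. If p ≥ 1/2, then K has no white edges and every black edge of K has both endpoints white. -/

import Mathlib

/-- Colors for edges of a colored regularity graph. -/
inductive EColor : Type
  | white
  | gray
  | black
deriving DecidableEq

/-- A colored regularity graph (CRG) on a finite vertex type `V`: each vertex is
white or black (`vWhite v = true` means white), and each pair of distinct vertices
gets a symmetric edge color (white, gray or black). -/
structure CRG (V : Type) [Fintype V] where
  vWhite : V → Bool
  ecolor : V → V → EColor
  ecolor_symm : ∀ u v, ecolor u v = ecolor v u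

namespace CRG

variable {V : Type} [Fintype V] [DecidableEq V]

/-- The matrix `M_K(p)`. -/
noncomputable def M (K : CRG V) (p : ℝ) (u v : V) : ℝ :=
  if u = v then (if K.vWhite u then p else 1 - p)
  else
    match K.ecolor u v with
    | EColor.white => p
    | EColor.black => 1 - p
    | EColor.gray => 0

/-- The function `g_K(p)`: the minimum of `xᵀ M_K(p) x` over nonnegative weight
vectors summing to `1`. -/
noncomputable def g (K : CRG V) (p : ℝ) : ℝ :=
  sInf {r : ℝ | ∃ x : V → ℝ, (∀ v, 0 ≤ x v) ∧ (∑ v, x v) = 1 ∧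
    r = ∑ u, ∑ v, x u * K.M p u v * x v}

/-- The sub-CRG induced on a subset `s` of the vertices. -/
def sub (K : CRG V) (s : Finset V) : CRG {v // v ∈ s} where
  vWhite := fun v => K.vWhite v.1
  ecolor := fun u v => K.ecolor u.1 v.1
  ecolor_symm := fun u v => K.ecolor_symm u.1 v.1

/-- `K` is `p`-core if `g_K(p) < g_{K'}(p)` for every proper (nonempty) sub-CRG `K'`. -/
def IsPCore (K : CRG V) (p : ℝ) : Prop :=
  ∀ s : Finset V, s.Nonempty → s ≠ Finset.univ → K.g p < (K.sub s).g p

/-- `x` is an optimal weight vector for `K` at `p`. -/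
def IsOptWeight (K : CRG V) (p : ℝ) (x : V → ℝ) : Prop :=
  (∀ v, 0 ≤ x v) ∧ (∑ v, x v) = 1 ∧
    (∑ u, ∑ v, x u * K.M p u v * x v) = K.g p

/-- The gray degree `d_G(v)`: total weight of gray neighbors of `v`. -/
noncomputable def dG (K : CRG V) (x : V → ℝ) (v : V) : ℝ :=
  ∑ w ∈ Finset.univ.filter fun w => w ≠ v ∧ K.ecolor v w = EColor.gray, x w

/-- The white degree `d_W(v)`: total weight of white neighbors of `v`, including `v`
itself if `v` is white. -/
noncomputable def dW (K : CRG V) (x : V → ℝ) (v : V) : ℝ :=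
  (∑ w ∈ Finset.univ.filter fun w => w ≠ v ∧ K.ecolor v w = EColor.white, x w) +
    (if K.vWhite v then x v else 0)

/-- The black degree `d_B(v)`: total weight of black neighbors of `v`, including `v`
itself if `v` is black. -/
noncomputable def dB (K : CRG V) (x : V → ℝ) (v : V) : ℝ :=
  (∑ w ∈ Finset.univ.filter fun w => w ≠ v ∧ K.ecolor v w = EColor.black, x w) +
    (if K.vWhite v then 0 else x v)

/-- The number of gray neighbors of `v`. -/
def grayDeg (K : CRG V) (v : V) : ℕ :=
  (Finset.univ.filter fun w => w ≠ v ∧ K.ecolor v w = EColor.gray).card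

end CRG

/-- A graph `H` embeds in a CRG `K`, written `H ↦ K`. -/
def EmbedsIn {α : Type*} {V : Type} [Fintype V] (H : SimpleGraph α) (K : CRG V) : Prop :=
  ∃ φ : α → V,
    (∀ a b : α, H.Adj a b →
      (φ a = φ b ∧ K.vWhite (φ a) = false) ∨
      (φ a ≠ φ b ∧ (K.ecolor (φ a) (φ b) = EColor.black ∨ K.ecolor (φ a) (φ b) = EColor.gray))) ∧
    (∀ a b : α, a ≠ b → ¬H.Adj a b →
      (φ a = φ b ∧ K.vWhite (φ a) = true) ∨
      (φ a ≠ φ b ∧ (K.ecolor (φ a) (φ b) = EColor.white ∨ K.ecolor (φ a) (φ b) = EColor.gray)))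

namespace CRGAux

open Finset

variable {V : Type} [Fintype V] [DecidableEq V]

/-- The quadratic form. -/
noncomputable def q (K : CRG V) (p : ℝ) (x : V → ℝ) : ℝ :=
  ∑ u, ∑ v, x u * K.M p u v * x v

/-- The bilinear form. -/
noncomputable def Bl (K : CRG V) (p : ℝ) (x y : V → ℝ) : ℝ :=
  ∑ u, ∑ v, x u * K.M p u v * y v

/-- Row sums. -/
noncomputable def row (K : CRG V) (p : ℝ) (x : V → ℝ) (v : V) : ℝ :=
  ∑ a, x a * K.M p a v

lemma M_symm (K : CRG V) (p : ℝ) (u v : V) : K.M p u v = K.M p v u := by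
  unfold CRG.M
  by_cases h : u = v
  · subst h; simp
  · rw [if_neg h, if_neg (fun hh => h hh.symm), K.ecolor_symm u v]

lemma M_nonneg (K : CRG V) {p : ℝ} (hp : p ∈ Set.Ioo (0:ℝ) 1) (u v : V) :
    0 ≤ K.M p u v := by
  obtain ⟨h0, h1⟩ := hp
  unfold CRG.M
  by_cases h : u = v
  · rw [if_pos h]; split <;> linarith
  · rw [if_neg h]
    cases K.ecolor u v
    · exact le_of_lt h0
    · exact le_refl 0
    · exact sub_nonneg.mpr (le_of_lt h1)

lemma M_of_white (K : CRG V) (p : ℝ) {u v : V} (h : u ≠ v)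
    (hc : K.ecolor u v = EColor.white) : K.M p u v = p := by
  unfold CRG.M; rw [if_neg h, hc]

lemma M_of_black (K : CRG V) (p : ℝ) {u v : V} (h : u ≠ v)
    (hc : K.ecolor u v = EColor.black) : K.M p u v = 1 - p := by
  unfold CRG.M; rw [if_neg h, hc]

lemma M_of_gray (K : CRG V) (p : ℝ) {u v : V} (h : u ≠ v)
    (hc : K.ecolor u v = EColor.gray) : K.M p u v = 0 := by
  unfold CRG.M; rw [if_neg h, hc]

lemma M_diag_white (K : CRG V) (p : ℝ) {u : V} (h : K.vWhite u = true) :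
    K.M p u u = p := by
  unfold CRG.M; rw [if_pos rfl, if_pos h]

lemma q_eq_Bl (K : CRG V) (p : ℝ) (x : V → ℝ) : q K p x = Bl K p x x := rfl

lemma Bl_symm (K : CRG V) (p : ℝ) (x y : V → ℝ) : Bl K p x y = Bl K p y x := by
  unfold Bl
  rw [Finset.sum_comm]
  exact Finset.sum_congr rfl fun u _ => Finset.sum_congr rfl fun v _ => by
    rw [M_symm]; ring

lemma Bl_eq_row (K : CRG V) (p : ℝ) (x y : V → ℝ) :
    Bl K p x y = ∑ v, row K p x v * y v := by
  unfold Bl row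
  rw [Finset.sum_comm]
  exact Finset.sum_congr rfl fun v _ => (Finset.sum_mul _ _ _).symm

lemma Bl_eq_col (K : CRG V) (p : ℝ) (x y : V → ℝ) :
    Bl K p x y = ∑ u, x u * (∑ v, K.M p u v * y v) := by
  unfold Bl
  refine Finset.sum_congr rfl fun u _ => ?_
  rw [Finset.mul_sum]
  exact Finset.sum_congr rfl fun v _ => by ring

lemma q_expand (K : CRG V) (p : ℝ) (x d : V → ℝ) :
    q K p (fun w => x w + d w) = q K p x + 2 * Bl K p x d + Bl K p d d := by
  have h : q K p (fun w => x w + d w)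
      = q K p x + (Bl K p x d + Bl K p d x) + Bl K p d d := by
    unfold q Bl
    rw [← Finset.sum_add_distrib, ← Finset.sum_add_distrib, ← Finset.sum_add_distrib]
    refine Finset.sum_congr rfl fun u _ => ?_
    rw [← Finset.sum_add_distrib, ← Finset.sum_add_distrib, ← Finset.sum_add_distrib]
    exact Finset.sum_congr rfl fun v _ => by ring
  rw [h, Bl_symm K p d x]; ring

lemma g_le (K : CRG V) {p : ℝ} (hp : p ∈ Set.Ioo (0:ℝ) 1) {x : V → ℝ}
    (h0 : ∀ v, 0 ≤ x v) (h1 : (∑ v, x v) = 1) : K.g p ≤ q K p x := by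
  apply csInf_le
  · refine ⟨0, ?_⟩
    rintro r ⟨y, hy0, hy1, rfl⟩
    exact Finset.sum_nonneg fun u _ => Finset.sum_nonneg fun v _ =>
      mul_nonneg (mul_nonneg (hy0 u) (M_nonneg K hp u v)) (hy0 v)
  · exact ⟨x, h0, h1, rfl⟩

lemma sub_M (K : CRG V) (p : ℝ) (s : Finset V) (u v : {v // v ∈ s}) :
    (K.sub s).M p u v = K.M p u.1 v.1 := by
  by_cases h : u = v
  · subst h
    unfold CRG.M
    rw [if_pos rfl, if_pos rfl]
    rfl
  · unfold CRG.M
    rw [if_neg h, if_neg (fun hv => h (Subtype.ext hv))]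
    rfl

lemma g_sub_le (K : CRG V) {p : ℝ} (hp : p ∈ Set.Ioo (0:ℝ) 1) (s : Finset V)
    {y : V → ℝ} (hy0 : ∀ v, 0 ≤ y v) (hy1 : (∑ v, y v) = 1)
    (hsupp : ∀ v ∉ s, y v = 0) :
    (K.sub s).g p ≤ q K p y := by
  apply csInf_le
  · refine ⟨0, ?_⟩
    rintro r ⟨z, hz0, hz1, rfl⟩
    exact Finset.sum_nonneg fun u _ => Finset.sum_nonneg fun v _ =>
      mul_nonneg (mul_nonneg (hz0 u) (M_nonneg (K.sub s) hp u v)) (hz0 v)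
  · refine ⟨fun v => y v.1, fun v => hy0 v.1, ?_, ?_⟩
    · rw [Finset.sum_coe_sort s (fun v => y v)]
      rw [← hy1]
      exact Finset.sum_subset (Finset.subset_univ s) (fun v _ hv => hsupp v hv)
    · have h1 : ∀ u : {v // v ∈ s}, (∑ v : {v // v ∈ s}, y u.1 * (K.sub s).M p u v * y v.1)
          = ∑ v ∈ s, y u.1 * K.M p u.1 v * y v := by
        intro u
        rw [← Finset.sum_coe_sort s (fun v => y u.1 * K.M p u.1 v * y v)]
        exact Finset.sum_congr rfl fun v _ => by rw [sub_M]
      have h2 : (∑ u : {v // v ∈ s}, ∑ v : {v // v ∈ s}, y u.1 * (K.sub s).M p u v * y v.1)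
          = ∑ u ∈ s, ∑ v ∈ s, y u * K.M p u v * y v := by
        rw [← Finset.sum_coe_sort s (fun u => ∑ v ∈ s, y u * K.M p u v * y v)]
        exact Finset.sum_congr rfl fun u _ => h1 u
      rw [h2]
      unfold q
      rw [Finset.sum_subset (Finset.subset_univ s) (fun u _ hu => by
        rw [hsupp u hu]
        exact Finset.sum_eq_zero fun v _ => by ring)]
      refine Finset.sum_congr rfl fun u _ => ?_
      rw [Finset.sum_subset (Finset.subset_univ s) (fun v _ hv => by
        rw [hsupp v hv]; ring)]

lemma g_lt_of_zero (K : CRG V) {p : ℝ} (hp : p ∈ Set.Ioo (0:ℝ) 1)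
    (hcore : K.IsPCore p) {y : V → ℝ} (hy0 : ∀ v, 0 ≤ y v) (hy1 : (∑ v, y v) = 1)
    {v : V} (hyv : y v = 0) : K.g p < q K p y := by
  set s : Finset V := Finset.univ.filter (fun w => y w ≠ 0) with hs
  have hne : s.Nonempty := by
    by_contra h
    rw [Finset.not_nonempty_iff_eq_empty] at h
    have : (∑ w, y w) = 0 := Finset.sum_eq_zero fun w _ => by
      by_contra hw
      have : w ∈ s := by simp [hs, hw]
      rw [h] at this
      exact absurd this (Finset.notMem_empty w)
    rw [hy1] at this; norm_num at this
  have hnequniv : s ≠ Finset.univ := by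
    intro h
    have : v ∈ s := h ▸ Finset.mem_univ v
    simp [hs] at this
    exact this hyv
  calc K.g p < (K.sub s).g p := hcore s hne hnequniv
    _ ≤ q K p y := g_sub_le K hp s hy0 hy1 (fun w hw => by
        by_contra h
        exact hw (by simp [hs, h]))

end CRGAux

namespace CRGAux

open Finset

variable {V : Type} [Fintype V] [DecidableEq V]

lemma exists_opt (K : CRG V) [Nonempty V] (p : ℝ) : ∃ x, K.IsOptWeight p x := by
  obtain ⟨v0⟩ := ‹Nonempty V›
  have hcont : Continuous (fun x : V → ℝ => q K p x) := by
    apply continuous_finset_sum; intro u _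
    apply continuous_finset_sum; intro v _
    exact ((continuous_apply u).mul continuous_const).mul (continuous_apply v)
  have hne : (stdSimplex ℝ V).Nonempty := by
    refine ⟨fun w => if w = v0 then 1 else 0, fun w => ?_, by simp⟩
    show (0:ℝ) ≤ if w = v0 then 1 else 0
    split <;> norm_num
  obtain ⟨x0, hx0mem, hmin⟩ :=
    (isCompact_stdSimplex ℝ V).exists_isMinOn hne hcont.continuousOn
  refine ⟨x0, hx0mem.1, hx0mem.2, ?_⟩
  have hset : {r : ℝ | ∃ x : V → ℝ, (∀ v, 0 ≤ x v) ∧ (∑ v, x v) = 1 ∧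
      r = ∑ u, ∑ v, x u * K.M p u v * x v} = (fun x => q K p x) '' stdSimplex ℝ V := by
    ext r
    constructor
    · rintro ⟨x, hx0, hx1, rfl⟩
      exact ⟨x, ⟨hx0, hx1⟩, rfl⟩
    · rintro ⟨x, hx, rfl⟩
      exact ⟨x, hx.1, hx.2, rfl⟩
  show q K p x0 = K.g p
  unfold CRG.g
  rw [hset]
  have hleast : IsLeast ((fun x => q K p x) '' stdSimplex ℝ V) (q K p x0) := by
    refine ⟨⟨x0, hx0mem, rfl⟩, ?_⟩
    rintro r ⟨x, hx, rfl⟩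
    exact hmin hx
  exact hleast.csInf_eq.symm

lemma pos_of_opt (K : CRG V) {p : ℝ} (hp : p ∈ Set.Ioo (0:ℝ) 1)
    (hcore : K.IsPCore p) {x : V → ℝ} (hx : K.IsOptWeight p x) (v : V) : 0 < x v := by
  rcases (hx.1 v).lt_or_eq with h | h
  · exact h
  · exfalso
    have := g_lt_of_zero K hp hcore hx.1 hx.2.1 h.symm
    have hq : q K p x = K.g p := hx.2.2
    rw [hq] at this
    exact lt_irrefl _ this

/-- summing against the difference of two indicators -/
lemma sum_mul_indsub (f : V → ℝ) (t : ℝ) (u v : V) :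
    (∑ w, f w * (t * ((if w = u then (1:ℝ) else 0) - (if w = v then 1 else 0))))
      = t * (f u - f v) := by
  have h : ∀ w, f w * (t * ((if w = u then (1:ℝ) else 0) - (if w = v then 1 else 0)))
      = t * (if w = u then f w else 0) - t * (if w = v then f w else 0) := by
    intro w; split_ifs <;> ring
  rw [Finset.sum_congr rfl fun w _ => h w, Finset.sum_sub_distrib,
    ← Finset.mul_sum, ← Finset.mul_sum, Finset.sum_ite_eq' Finset.univ u f,
    Finset.sum_ite_eq' Finset.univ v f]
  simp only [Finset.mem_univ, if_pos]
  ring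

/-- All rows of an optimal vector of a p-core CRG equal g. -/
lemma row_eq_g (K : CRG V) {p : ℝ} (hp : p ∈ Set.Ioo (0:ℝ) 1)
    (hcore : K.IsPCore p) {x : V → ℝ} (hx : K.IsOptWeight p x) (w : V) :
    row K p x w = K.g p := by
  have hpos := pos_of_opt K hp hcore hx
  -- first: no row is less than another
  have key : ∀ u v : V, u ≠ v → ¬ (row K p x u < row K p x v) := by
    intro u v huv hlt
    set D : ℝ := row K p x v - row K p x u with hD
    have hDpos : 0 < D := by simp only [hD]; linarith
    set c : ℝ := K.M p u u - K.M p u v - K.M p v u + K.M p v v with hc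
    set t : ℝ := min (x v) (D / (|c| + 1)) with ht
    have habs : (0:ℝ) < |c| + 1 := by positivity
    have htpos : 0 < t := lt_min (hpos v) (by positivity)
    have htxv : t ≤ x v := min_le_left _ _
    have htD : t * (|c| + 1) ≤ D := by
      rw [← le_div_iff₀ habs]
      exact min_le_right _ _
    set d : V → ℝ := fun w => t * ((if w = u then (1:ℝ) else 0) - (if w = v then 1 else 0)) with hd
    set y : V → ℝ := fun w => x w + d w with hy
    have hy0 : ∀ a, 0 ≤ y a := by
      intro a
      simp only [hy, hd]
      by_cases h1 : a = u
      · rw [if_pos h1, if_neg (h1 ▸ huv)]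
        have := hx.1 a
        nlinarith
      · rw [if_neg h1]
        by_cases h2 : a = v
        · rw [if_pos h2, h2]
          have := hx.1 v
          nlinarith
        · rw [if_neg h2]
          have := hx.1 a
          nlinarith
    have hy1 : (∑ a, y a) = 1 := by
      simp only [hy]
      rw [Finset.sum_add_distrib, hx.2.1]
      have : (∑ a, d a) = 0 := by
        have := sum_mul_indsub (fun _ => (1:ℝ)) t u v
        simp only [one_mul] at this
        simp only [hd]
        rw [this]; ring
      rw [this]; ring
    -- compute q y
    have hBxd : Bl K p x d = t * (row K p x u - row K p x v) := by
      rw [Bl_eq_row]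
      exact sum_mul_indsub (row K p x) t u v
    have hinner : ∀ a, (∑ b, K.M p a b * d b) = t * (K.M p a u - K.M p a v) :=
      fun a => sum_mul_indsub (K.M p a) t u v
    have hBdd : Bl K p d d = t * (t * (K.M p u u - K.M p u v) - t * (K.M p v u - K.M p v v)) := by
      rw [Bl_eq_col]
      rw [Finset.sum_congr rfl fun a _ => by rw [hinner a]]
      have h2 : ∀ a, d a * (t * (K.M p a u - K.M p a v))
          = (t * (K.M p a u - K.M p a v)) * d a := fun a => mul_comm _ _
      rw [Finset.sum_congr rfl fun a _ => h2 a]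
      exact sum_mul_indsub (fun a => t * (K.M p a u - K.M p a v)) t u v
    have hqy : q K p y = K.g p + 2 * (t * (row K p x u - row K p x v)) + Bl K p d d := by
      have := q_expand K p x d
      simp only [hy]
      rw [this, hBxd]
      have hqx : q K p x = K.g p := hx.2.2
      rw [hqx]
    have hqylt : q K p y < K.g p := by
      rw [hqy, hBdd]
      have hcabs : c ≤ |c| := le_abs_self c
      have h1 : t * c ≤ t * |c| := by nlinarith
      have h2 : t * |c| < D := by nlinarith
      have hexp : t * (t * (K.M p u u - K.M p u v) - t * (K.M p v u - K.M p v v)) = t * (t * c) := by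
        simp only [hc]; ring
      rw [hexp]
      have : 2 * (t * (row K p x u - row K p x v)) = -(2 * (t * D)) := by
        simp only [hD]; ring
      rw [this]
      nlinarith
    exact absurd (g_le K hp hy0 hy1) (not_le.mpr hqylt)
  have hall : ∀ u v : V, row K p x u = row K p x v := by
    intro u v
    by_cases h : u = v
    · rw [h]
    · rcases lt_trichotomy (row K p x u) (row K p x v) with h1 | h1 | h1
      · exact absurd h1 (key u v h)
      · exact h1
      · exact absurd h1 (key v u (fun hh => h hh.symm))
  have hq : q K p x = ∑ v, row K p x v * x v := Bl_eq_row K p x x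
  have hqx : q K p x = K.g p := hx.2.2
  have hgq : K.g p = ∑ v, row K p x w * x v := by
    rw [← hqx, hq]
    exact Finset.sum_congr rfl fun v _ => by rw [hall v w]
  rw [hgq, ← Finset.mul_sum, hx.2.1, mul_one]

end CRGAux

namespace CRGAux

open Finset

variable {V : Type} [Fintype V] [DecidableEq V]

lemma M_diag_le (K : CRG V) {p : ℝ} (hple : p ≤ 1/2) (u : V) :
    K.M p u u ≤ 1 - p := by
  unfold CRG.M
  rw [if_pos rfl]
  split <;> linarith

lemma no_black (K : CRG V) [Nonempty V] {p : ℝ} (hp : p ∈ Set.Ioo (0:ℝ) 1)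
    (hple : p ≤ 1/2) (hcore : K.IsPCore p) {u v : V} (huv : u ≠ v) :
    K.ecolor u v ≠ EColor.black := by
  intro hblack
  obtain ⟨x, hx⟩ := exists_opt K p
  have hpos := pos_of_opt K hp hcore hx
  have hrow := row_eq_g K hp hcore hx
  have hqx : q K p x = K.g p := hx.2.2
  set t : ℝ := x v with ht
  have htpos : 0 < t := hpos v
  set d : V → ℝ := fun w => t * ((if w = u then (1:ℝ) else 0) - (if w = v then 1 else 0)) with hd
  set y : V → ℝ := fun w => x w + d w with hy
  have hyv : y v = 0 := by
    show x v + t * ((if v = u then (1:ℝ) else 0) - (if v = v then 1 else 0)) = 0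
    rw [if_neg (fun h : v = u => huv h.symm), if_pos rfl, ht]
    ring
  have hy0 : ∀ a, 0 ≤ y a := by
    intro a
    simp only [hy, hd]
    by_cases h1 : a = u
    · rw [if_pos h1, if_neg (h1 ▸ huv)]
      have := hx.1 a
      nlinarith
    · rw [if_neg h1]
      by_cases h2 : a = v
      · rw [if_pos h2, h2]
        nlinarith
      · rw [if_neg h2]
        have := hx.1 a
        nlinarith
  have hy1 : (∑ a, y a) = 1 := by
    simp only [hy]
    rw [Finset.sum_add_distrib, hx.2.1]
    have hsum : (∑ a, d a) = 0 := by
      have h := sum_mul_indsub (fun _ => (1:ℝ)) t u v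
      simp only [one_mul] at h
      simp only [hd]
      rw [h]; ring
    rw [hsum]; ring
  have hBxd : Bl K p x d = t * (row K p x u - row K p x v) := by
    rw [Bl_eq_row]
    exact sum_mul_indsub (row K p x) t u v
  have hBxd0 : Bl K p x d = 0 := by
    rw [hBxd, hrow u, hrow v]; ring
  have hinner : ∀ a, (∑ b, K.M p a b * d b) = t * (K.M p a u - K.M p a v) :=
    fun a => sum_mul_indsub (K.M p a) t u v
  have hBdd : Bl K p d d
      = t * (t * (K.M p u u - K.M p u v) - t * (K.M p v u - K.M p v v)) := by
    rw [Bl_eq_col]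
    rw [Finset.sum_congr rfl fun a _ => by rw [hinner a]]
    rw [Finset.sum_congr rfl fun a _ =>
      (mul_comm (d a) (t * (K.M p a u - K.M p a v)))]
    exact sum_mul_indsub (fun a => t * (K.M p a u - K.M p a v)) t u v
  have hMuv : K.M p u v = 1 - p := M_of_black K p huv hblack
  have hMvu : K.M p v u = 1 - p := M_of_black K p (Ne.symm huv) ((K.ecolor_symm u v) ▸ hblack)
  have hdu : K.M p u u ≤ 1 - p := M_diag_le K hple u
  have hdv : K.M p v v ≤ 1 - p := M_diag_le K hple v
  have hqy : q K p y = K.g p + 2 * Bl K p x d + Bl K p d d := by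
    simp only [hy]
    rw [q_expand, hqx]
  have hle : q K p y ≤ K.g p := by
    rw [hqy, hBxd0, hBdd, hMuv, hMvu]
    have h2 : t * (t * (K.M p u u - (1 - p)) - t * (1 - p - K.M p v v)) ≤ 0 := by
      nlinarith [mul_nonneg htpos.le htpos.le]
    linarith
  have hlt : K.g p < q K p y := g_lt_of_zero K hp hcore hy0 hy1 hyv
  linarith

lemma no_white_at_white (K : CRG V) [Nonempty V] {p : ℝ} (hp : p ∈ Set.Ioo (0:ℝ) 1)
    (hple : p ≤ 1/2) (hcore : K.IsPCore p) {u v : V} (huv : u ≠ v)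
    (hcol : K.ecolor u v = EColor.white) : K.vWhite u = false := by
  by_contra h
  have hWu : K.vWhite u = true := by simpa using h
  obtain ⟨x, hx⟩ := exists_opt K p
  have hpos := pos_of_opt K hp hcore hx
  have hrow := row_eq_g K hp hcore hx
  have hqx : q K p x = K.g p := hx.2.2
  set N : Finset V := Finset.univ.filter (fun w => w ≠ u ∧ K.ecolor u w = EColor.white) with hN
  have hvN : v ∈ N := Finset.mem_filter.mpr ⟨Finset.mem_univ v, fun h => huv h.symm, hcol⟩
  have huN : u ∉ N := by simp [hN]
  set W : ℝ := ∑ w ∈ N, x w with hWdef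
  have hWpos : 0 < W := Finset.sum_pos (fun w _ => hpos w) ⟨v, hvN⟩
  set xN : V → ℝ := fun w => if w ∈ N then x w else 0 with hxN
  set d : V → ℝ := fun w => W * (if w = u then 1 else 0) - xN w with hd
  set y : V → ℝ := fun w => x w + d w with hy
  -- the generic sum against d
  have hsum_d : ∀ f : V → ℝ, (∑ w, f w * d w) = W * f u - ∑ w ∈ N, f w * x w := by
    intro f
    have h1 : ∀ w, f w * d w
        = W * (if w = u then f w else 0) - (if w ∈ N then f w * x w else 0) := by
      intro w
      simp only [hd, hxN]
      split_ifs <;> ring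
    rw [Finset.sum_congr rfl fun w _ => h1 w, Finset.sum_sub_distrib, ← Finset.mul_sum,
      Finset.sum_ite_eq' Finset.univ u f, Finset.sum_ite_mem, Finset.univ_inter]
    simp only [Finset.mem_univ, if_pos]
  have hyv : y v = 0 := by
    simp only [hy, hd, hxN]
    rw [if_neg (fun h : v = u => huv h.symm), if_pos hvN]
    ring
  have hy0 : ∀ a, 0 ≤ y a := by
    intro a
    simp only [hy, hd, hxN]
    by_cases h1 : a ∈ N
    · have hau : a ≠ u := fun hh => huN (hh ▸ h1)
      rw [if_pos h1, if_neg hau]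
      ring_nf
      exact le_refl _
    · rw [if_neg h1]
      have := hx.1 a
      by_cases h2 : a = u
      · rw [if_pos h2]; nlinarith
      · rw [if_neg h2]; nlinarith
  have hy1 : (∑ a, y a) = 1 := by
    simp only [hy]
    rw [Finset.sum_add_distrib, hx.2.1]
    have hsum : (∑ a, d a) = 0 := by
      have h := hsum_d (fun _ => (1:ℝ))
      simp only [one_mul] at h
      rw [h, hWdef]; ring
    rw [hsum]; ring
  -- row u = p * x u + p * W
  have hMub : ∀ b ∈ N, K.M p u b = p := by
    intro b hb
    obtain ⟨-, hb1, hb2⟩ := Finset.mem_filter.mp hb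
    exact M_of_white K p (fun hh => hb1 hh.symm) hb2
  have hrowu : row K p x u = p * x u + p * W := by
    unfold row
    have h1 : ∀ b, x b * K.M p b u
        = p * x b * (if b = u then 1 else 0) + p * x b * (if b ∈ N then 1 else 0) := by
      intro b
      by_cases hb : b = u
      · rw [hb, M_diag_white K p hWu, if_pos rfl, if_neg huN]
        ring
      · by_cases hbN : b ∈ N
        · rw [M_symm, hMub b hbN, if_neg hb, if_pos hbN]
          ring
        · have hzero : K.M p b u = 0 := by
            have hne : u ≠ b := fun hh => hb hh.symm
            have hnw : K.ecolor u b ≠ EColor.white := by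
              intro hh
              exact hbN (Finset.mem_filter.mpr ⟨Finset.mem_univ b, hb, hh⟩)
            have hnb : K.ecolor u b ≠ EColor.black := no_black K hp hple hcore hne
            rw [M_symm]
            cases hcc : K.ecolor u b
            · exact absurd hcc hnw
            · exact M_of_gray K p hne hcc
            · exact absurd hcc hnb
          rw [hzero, if_neg hb, if_neg hbN]
          ring
    rw [Finset.sum_congr rfl fun b _ => h1 b, Finset.sum_add_distrib]
    have e1 : (∑ b, p * x b * (if b = u then (1:ℝ) else 0)) = p * x u := by
      have h2 : ∀ b, p * x b * (if b = u then (1:ℝ) else 0) = if b = u then p * x b else 0 := by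
        intro b; split_ifs <;> ring
      rw [Finset.sum_congr rfl fun b _ => h2 b,
        Finset.sum_ite_eq' Finset.univ u (fun b => p * x b)]
      simp only [Finset.mem_univ, if_pos]
    have e2 : (∑ b, p * x b * (if b ∈ N then (1:ℝ) else 0)) = p * W := by
      have h2 : ∀ b, p * x b * (if b ∈ N then (1:ℝ) else 0) = if b ∈ N then p * x b else 0 := by
        intro b; split_ifs <;> ring
      rw [Finset.sum_congr rfl fun b _ => h2 b, Finset.sum_ite_mem, Finset.univ_inter,
        ← Finset.mul_sum, hWdef]
    rw [e1, e2]
  have hgval : K.g p = p * x u + p * W := by rw [← hrow u, hrowu]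
  -- linear term vanishes
  have hBxd : Bl K p x d = 0 := by
    rw [Bl_eq_row, hsum_d (row K p x), hrow u]
    rw [Finset.sum_congr rfl fun w _ => by rw [hrow w]]
    rw [← Finset.mul_sum, ← hWdef]
    ring
  -- quadratic term nonpositive
  set h0 : V → ℝ := fun a => W * K.M p a u - ∑ b ∈ N, K.M p a b * x b with hh0
  have hBdd : Bl K p d d = W * h0 u - ∑ a ∈ N, h0 a * x a := by
    rw [Bl_eq_col]
    rw [Finset.sum_congr rfl fun a _ => by rw [hsum_d (K.M p a)]]
    rw [Finset.sum_congr rfl fun a _ =>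
      (mul_comm (d a) (W * K.M p a u - ∑ b ∈ N, K.M p a b * x b))]
    exact hsum_d h0
  have hh0u : h0 u = 0 := by
    simp only [hh0]
    rw [M_diag_white K p hWu]
    rw [Finset.sum_congr rfl fun b hb => by rw [hMub b hb]]
    rw [← Finset.mul_sum, ← hWdef]
    ring
  have hh0N : ∀ a ∈ N, 0 ≤ h0 a := by
    intro a ha
    obtain ⟨-, hau, hcau⟩ := Finset.mem_filter.mp ha
    have hMau : K.M p a u = p := by
      rw [M_symm]
      exact M_of_white K p (fun hh => hau hh.symm) hcau
    have hsub : (∑ b ∈ insert u N, x b * K.M p b a) ≤ ∑ b, x b * K.M p b a :=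
      Finset.sum_le_sum_of_subset_of_nonneg (Finset.subset_univ _)
        (fun b _ _ => mul_nonneg (hx.1 b) (M_nonneg K hp b a))
    rw [Finset.sum_insert huN] at hsub
    have hrowa : (∑ b, x b * K.M p b a) = K.g p := hrow a
    have hMua : K.M p u a = p := M_of_white K p (fun hh => hau hh.symm) hcau
    have hcongr : (∑ b ∈ N, K.M p a b * x b) = ∑ b ∈ N, x b * K.M p b a :=
      Finset.sum_congr rfl fun b _ => by rw [M_symm]; ring
    simp only [hh0]
    rw [hMau, hcongr]
    rw [hrowa, hMua, hgval] at hsub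
    linarith
  have hBdd_le : Bl K p d d ≤ 0 := by
    rw [hBdd, hh0u]
    have : 0 ≤ ∑ a ∈ N, h0 a * x a :=
      Finset.sum_nonneg fun a ha => mul_nonneg (hh0N a ha) (hx.1 a)
    linarith
  have hqy : q K p y = K.g p + 2 * Bl K p x d + Bl K p d d := by
    simp only [hy]
    rw [q_expand, hqx]
  have hle : q K p y ≤ K.g p := by
    rw [hqy, hBxd]
    linarith
  have hlt : K.g p < q K p y := g_lt_of_zero K hp hcore hy0 hy1 hyv
  linarith

end CRGAux

namespace CRGAux

open Finset

variable {V : Type} [Fintype V] [DecidableEq V]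

def swapc : EColor → EColor
  | EColor.white => EColor.black
  | EColor.gray => EColor.gray
  | EColor.black => EColor.white

def swapK (K : CRG V) : CRG V where
  vWhite := fun v => !K.vWhite v
  ecolor := fun u v => swapc (K.ecolor u v)
  ecolor_symm := fun u v => congrArg swapc (K.ecolor_symm u v)

lemma swap_M (K : CRG V) (p : ℝ) (u v : V) : (swapK K).M (1 - p) u v = K.M p u v := by
  unfold CRG.M
  by_cases h : u = v
  · rw [if_pos h, if_pos h]
    show (if (!K.vWhite u) = true then 1 - p else 1 - (1 - p)) = _
    cases hb : K.vWhite u <;> simp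
  · rw [if_neg h, if_neg h]
    show (match swapc (K.ecolor u v) with
      | EColor.white => 1 - p
      | EColor.black => 1 - (1 - p)
      | EColor.gray => 0) = _
    cases K.ecolor u v <;> show _ = _ <;> norm_num [swapc]

lemma swap_g (K : CRG V) (p : ℝ) : (swapK K).g (1 - p) = K.g p := by
  have hMeq : ∀ x : V → ℝ,
      (∑ u, ∑ v, x u * (swapK K).M (1 - p) u v * x v)
        = ∑ u, ∑ v, x u * K.M p u v * x v :=
    fun x => Finset.sum_congr rfl fun u _ => Finset.sum_congr rfl fun v _ => by
      rw [swap_M]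
  unfold CRG.g
  congr 1
  ext r
  simp only [Set.mem_setOf_eq]
  constructor <;> rintro ⟨x, h0, h1, rfl⟩ <;> refine ⟨x, h0, h1, ?_⟩
  · exact hMeq x
  · exact (hMeq x).symm

lemma swap_sub (K : CRG V) (s : Finset V) : (swapK K).sub s = swapK (K.sub s) := rfl

lemma swap_core (K : CRG V) (p : ℝ) (h : K.IsPCore p) : (swapK K).IsPCore (1 - p) := by
  intro s hs hne
  rw [swap_g K p, swap_sub, swap_g (K.sub s) p]
  exact h s hs hne

end CRGAux


theorem pcore_structure {V : Type} [Fintype V] [DecidableEq V] [Nonempty V]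
    (p : ℝ) (hp : p ∈ Set.Ioo (0 : ℝ) 1) (K : CRG V) (hcore : K.IsPCore p) :
    (p ≤ 1 / 2 →
      (∀ u v : V, u ≠ v → K.ecolor u v ≠ EColor.black) ∧
      (∀ u v : V, u ≠ v → K.ecolor u v = EColor.white →
        K.vWhite u = false ∧ K.vWhite v = false)) ∧
    (1 / 2 ≤ p →
      (∀ u v : V, u ≠ v → K.ecolor u v ≠ EColor.white) ∧
      (∀ u v : V, u ≠ v → K.ecolor u v = EColor.black →
        K.vWhite u = true ∧ K.vWhite v = true)) := by
  constructor
  · intro hple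
    refine ⟨fun u v huv => CRGAux.no_black K hp hple hcore huv, fun u v huv hw => ?_⟩
    exact ⟨CRGAux.no_white_at_white K hp hple hcore huv hw,
      CRGAux.no_white_at_white K hp hple hcore (Ne.symm huv)
        ((K.ecolor_symm v u).trans hw)⟩
  · intro hple
    have hp' : (1 - p) ∈ Set.Ioo (0:ℝ) 1 := ⟨by linarith [hp.2], by linarith [hp.1]⟩
    have hple' : 1 - p ≤ 1 / 2 := by linarith
    have hcore' : (CRGAux.swapK K).IsPCore (1 - p) := CRGAux.swap_core K p hcore
    constructor
    · intro u v huv hwhite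
      have : (CRGAux.swapK K).ecolor u v = EColor.black := by
        show CRGAux.swapc (K.ecolor u v) = EColor.black
        rw [hwhite]
        rfl
      exact CRGAux.no_black (CRGAux.swapK K) hp' hple' hcore' huv this
    · intro u v huv hblack
      have hsw : (CRGAux.swapK K).ecolor u v = EColor.white := by
        show CRGAux.swapc (K.ecolor u v) = EColor.white
        rw [hblack]
        rfl
      have hsw' : (CRGAux.swapK K).ecolor v u = EColor.white :=
        ((CRGAux.swapK K).ecolor_symm v u).trans hsw
      have h1 := CRGAux.no_white_at_white (CRGAux.swapK K) hp' hple' hcore' huv hsw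
      have h2 := CRGAux.no_white_at_white (CRGAux.swapK K) hp' hple' hcore'
        (Ne.symm huv) hsw'
      constructor
      · simpa [CRGAux.swapK] using h1
      · simpa [CRGAux.swapK] using h2
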